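/- Let F : ℂ³ → ℝ³ be the Harvey–Lawson map F(z₁,z₂,z₃) = (Im(z₁z₂z₃), |z₁|² − |z₂|², |z₁|² − |z₃|²). For every z ∈ ℂ³ at which the Fréchet derivative DF_z : ℂ³ → ℝ³ is surjective, the kernel of DF_z is a 3-dimensional ℝ-linear subspace of ℂ³ ≅ ℝ⁶ on which the standard symplectic form ω of ℂ³ vanishes identically. In other words, the regular fibres of the Harvey–Lawson fibration are Lagrangian. -/

import Mathlib

/-- The Harvey–Lawson map `F(z) = (Im(z₁z₂z₃), |z₁|² − |z₂|², |z₁|² − |z₃|²)`. -/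
noncomputable def F12 (z : ℂ × ℂ × ℂ) : ℝ × ℝ × ℝ :=
  ((z.1 * z.2.1 * z.2.2).im,
    ‖z.1‖ ^ 2 - ‖z.2.1‖ ^ 2,
    ‖z.1‖ ^ 2 - ‖z.2.2‖ ^ 2)

/-- The standard symplectic form on `ℂ³`: `ω(u,v) = ∑ⱼ Im(conj uⱼ · vⱼ)`. -/
def omega3 (u v : ℂ × ℂ × ℂ) : ℝ :=
  ((starRingEnd ℂ) u.1 * v.1).im + ((starRingEnd ℂ) u.2.1 * v.2.1).im +
    ((starRingEnd ℂ) u.2.2 * v.2.2).im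

lemma omega3_add_left (x y v : ℂ × ℂ × ℂ) :
    omega3 (x + y) v = omega3 x v + omega3 y v := by
  simp [omega3, add_mul]; ring

lemma omega3_smul_left (r : ℝ) (x v : ℂ × ℂ × ℂ) :
    omega3 (r • x) v = r * omega3 x v := by
  simp [omega3, Prod.smul_fst, Prod.smul_snd, Complex.real_smul, map_mul,
    Complex.conj_ofReal, mul_assoc, Complex.ofReal_mul']
  ring

lemma fderiv_F12_apply (z v : ℂ × ℂ × ℂ) :
    fderiv ℝ F12 z v =
      ((v.1 * z.2.1 * z.2.2 + z.1 * v.2.1 * z.2.2 + z.1 * z.2.1 * v.2.2).im,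
        2 * ((starRingEnd ℂ) z.1 * v.1).re - 2 * ((starRingEnd ℂ) z.2.1 * v.2.1).re,
        2 * ((starRingEnd ℂ) z.1 * v.1).re - 2 * ((starRingEnd ℂ) z.2.2 * v.2.2).re) := by
  have hF : F12 = fun z : ℂ × ℂ × ℂ =>
      ((z.1 * z.2.1 * z.2.2).im,
        (z.1.re * z.1.re + z.1.im * z.1.im) - (z.2.1.re * z.2.1.re + z.2.1.im * z.2.1.im),
        (z.1.re * z.1.re + z.1.im * z.1.im) - (z.2.2.re * z.2.2.re + z.2.2.im * z.2.2.im)) := by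
    funext w
    simp [F12, Complex.sq_norm, Complex.normSq_apply]
  have ha : HasFDerivAt (fun z : ℂ × ℂ × ℂ => z.1) (ContinuousLinearMap.fst ℝ ℂ (ℂ × ℂ)) z :=
    hasFDerivAt_fst
  have hb : HasFDerivAt (fun z : ℂ × ℂ × ℂ => z.2.1)
      ((ContinuousLinearMap.fst ℝ ℂ ℂ).comp (ContinuousLinearMap.snd ℝ ℂ (ℂ × ℂ))) z :=
    hasFDerivAt_fst.comp z hasFDerivAt_snd
  have hc : HasFDerivAt (fun z : ℂ × ℂ × ℂ => z.2.2)
      ((ContinuousLinearMap.snd ℝ ℂ ℂ).comp (ContinuousLinearMap.snd ℝ ℂ (ℂ × ℂ))) z :=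
    hasFDerivAt_snd.comp z hasFDerivAt_snd
  have h1 := Complex.imCLM.hasFDerivAt.comp z ((ha.mul hb).mul hc)
  have hare := Complex.reCLM.hasFDerivAt.comp z ha
  have haim := Complex.imCLM.hasFDerivAt.comp z ha
  have hbre := Complex.reCLM.hasFDerivAt.comp z hb
  have hbim := Complex.imCLM.hasFDerivAt.comp z hb
  have hcre := Complex.reCLM.hasFDerivAt.comp z hc
  have hcim := Complex.imCLM.hasFDerivAt.comp z hc
  have h2 := ((hare.mul hare).add (haim.mul haim)).sub ((hbre.mul hbre).add (hbim.mul hbim))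
  have h3 := ((hare.mul hare).add (haim.mul haim)).sub ((hcre.mul hcre).add (hcim.mul hcim))
  have hD := h1.prodMk (h2.prodMk h3)
  have hD2 := hD.congr_of_eventuallyEq
    (Filter.Eventually.of_forall fun w => congrFun hF w)
  rw [hD2.fderiv]
  simp [ContinuousLinearMap.prod_apply, Complex.ext_iff, Complex.mul_re, Complex.mul_im]
  refine ⟨by ring, by ring, by ring⟩

/-- The regular fibres of the Harvey–Lawson fibration are Lagrangian: wherever
`DF_z` is surjective, its kernel is 3-dimensional and `ω` vanishes on it. -/
theorem stmt14 :
    ∀ z : ℂ × ℂ × ℂ, Function.Surjective (fderiv ℝ F12 z) →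
      Module.finrank ℝ ↥(LinearMap.ker (fderiv ℝ F12 z : ℂ × ℂ × ℂ →ₗ[ℝ] ℝ × ℝ × ℝ)) = 3 ∧
      ∀ u ∈ LinearMap.ker (fderiv ℝ F12 z : ℂ × ℂ × ℂ →ₗ[ℝ] ℝ × ℝ × ℝ),
        ∀ v ∈ LinearMap.ker (fderiv ℝ F12 z : ℂ × ℂ × ℂ →ₗ[ℝ] ℝ × ℝ × ℝ),
        omega3 u v = 0 := by
  intro z hsurj
  set a := z.1 with hadef
  set b := z.2.1 with hbdef
  set c := z.2.2 with hcdef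
  set D := fderiv ℝ F12 z with hDdef
  -- dimension of the kernel via rank-nullity
  have hdom : Module.finrank ℝ (ℂ × ℂ × ℂ) = 6 := by
    simp [Module.finrank_prod, Complex.finrank_real_complex]
  have hcod : Module.finrank ℝ (ℝ × ℝ × ℝ) = 3 := by
    simp [Module.finrank_prod]
  have hrangetop : LinearMap.range (D : (ℂ × ℂ × ℂ) →ₗ[ℝ] ℝ × ℝ × ℝ) = ⊤ :=
    LinearMap.range_eq_top.2 hsurj
  have hrn := LinearMap.finrank_range_add_finrank_ker (D : (ℂ × ℂ × ℂ) →ₗ[ℝ] ℝ × ℝ × ℝ)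
  rw [hrangetop, finrank_top, hdom, hcod] at hrn
  have hkerdim : Module.finrank ℝ ↥(LinearMap.ker (D : (ℂ × ℂ × ℂ) →ₗ[ℝ] ℝ × ℝ × ℝ)) = 3 := by
    omega
  refine ⟨hkerdim, ?_⟩
  -- the Hamiltonian vector fields
  set X : Fin 3 → ℂ × ℂ × ℂ := ![
    ((starRingEnd ℂ) (b * c), (starRingEnd ℂ) (a * c), (starRingEnd ℂ) (a * b)),
    (-(Complex.I * a), Complex.I * b, 0),
    (-(Complex.I * a), 0, Complex.I * c)] with hXdef
  -- key identities: ω(Xᵢ, v) in terms of D v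
  have hkey0 : ∀ v, omega3 (X 0) v = (D v).1 := by
    intro v
    rw [hDdef, fderiv_F12_apply]
    simp [omega3, hXdef, Complex.ext_iff, Complex.mul_re, Complex.mul_im]
    ring
  have hkey1 : ∀ v, omega3 (X 1) v = (1 / 2) * (D v).2.1 := by
    intro v
    rw [hDdef, fderiv_F12_apply]
    simp [omega3, hXdef, Complex.ext_iff, Complex.mul_re, Complex.mul_im]
    ring
  have hkey2 : ∀ v, omega3 (X 2) v = (1 / 2) * (D v).2.2 := by
    intro v
    rw [hDdef, fderiv_F12_apply]
    simp [omega3, hXdef, Complex.ext_iff, Complex.mul_re, Complex.mul_im]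
    ring
  -- the Xᵢ lie in the kernel
  have hXker : ∀ i, X i ∈ LinearMap.ker (D : (ℂ × ℂ × ℂ) →ₗ[ℝ] ℝ × ℝ × ℝ) := by
    intro i
    rw [LinearMap.mem_ker]
    fin_cases i <;>
    · show D _ = 0
      rw [hDdef, fderiv_F12_apply]
      refine Prod.ext ?_ (Prod.ext ?_ ?_) <;>
        simp [hXdef, Complex.ext_iff, Complex.mul_re, Complex.mul_im] <;> ring
  -- linear independence of the Xᵢ
  have hli : LinearIndependent ℝ X := by
    rw [Fintype.linearIndependent_iff]
    intro g hg
    have hω : ∀ v, g 0 * omega3 (X 0) v + g 1 * omega3 (X 1) v + g 2 * omega3 (X 2) v = 0 := by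
      intro v
      have h0 : omega3 (∑ i, g i • X i) v = 0 := by
        rw [hg]; simp [omega3]
      rw [Fin.sum_univ_three, omega3_add_left, omega3_add_left,
        omega3_smul_left, omega3_smul_left, omega3_smul_left] at h0
      linarith
    have hv : ∀ w : ℝ × ℝ × ℝ, g 0 * w.1 + g 1 * ((1/2) * w.2.1) + g 2 * ((1/2) * w.2.2) = 0 := by
      intro w
      obtain ⟨v, hv⟩ := hsurj w
      have := hω v
      rw [hkey0, hkey1, hkey2] at this
      rw [← hv]
      exact this
    intro i
    fin_cases i
    · have := hv (1, 0, 0); simpa using this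
    · have := hv (0, 2, 0); simpa using this
    · have := hv (0, 0, 2); simpa using this
  -- the span of the Xᵢ equals the kernel
  have hle : Submodule.span ℝ (Set.range X) ≤ LinearMap.ker (D : (ℂ × ℂ × ℂ) →ₗ[ℝ] ℝ × ℝ × ℝ) := by
    rw [Submodule.span_le]
    rintro x ⟨i, rfl⟩
    exact hXker i
  have hspan_rank : Module.finrank ℝ ↥(Submodule.span ℝ (Set.range X)) = 3 := by
    rw [finrank_span_eq_card hli]
    simp
  have heq : Submodule.span ℝ (Set.range X)
      = LinearMap.ker (D : (ℂ × ℂ × ℂ) →ₗ[ℝ] ℝ × ℝ × ℝ) :=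
    Submodule.eq_of_le_of_finrank_eq hle (by rw [hspan_rank, hkerdim])
  -- conclude
  intro u hu v hv
  have hu2 : u ∈ Submodule.span ℝ (Set.range X) := by
    rw [heq]; exact hu
  obtain ⟨cu, hcu⟩ := (Submodule.mem_span_range_iff_exists_fun ℝ).1 hu2
  have hDv : D v = 0 := hv
  have hω0 : omega3 (X 0) v = 0 := by rw [hkey0, hDv]; rfl
  have hω1 : omega3 (X 1) v = 0 := by rw [hkey1, hDv]; simp [Prod.snd_zero]
  have hω2 : omega3 (X 2) v = 0 := by rw [hkey2, hDv]; simp [Prod.snd_zero]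
  rw [← hcu]
  rw [Fin.sum_univ_three, omega3_add_left, omega3_add_left,
    omega3_smul_left, omega3_smul_left, omega3_smul_left,
    hω0, hω1, hω2]
  ring
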